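/- For every integer N ≥ 3, the complete N-gonal arrangement P̄_N = P_N ∪ {z = 0} is supersolvable if and only if N is even. -/

import Mathlib

open MvPolynomial

noncomputable section

abbrev Pt : Type := Projectivization ℂ (Fin 3 → ℂ)
abbrev S3 : Type := MvPolynomial (Fin 3) ℂ

/-- The point `P` lies on the line with coefficient vector `L`. -/
def onLine (L P : Pt) : Prop := ∑ i, L.rep i * P.rep i = 0

/-- The number of lines of the arrangement `A` passing through the point `P`. -/
def mult (A : Set Pt) (P : Pt) : ℕ := {L ∈ A | onLine L P}.ncard

/-- The singular points of the arrangement: points on at least two lines. -/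
def Sing (A : Set Pt) : Set Pt := {P | 2 ≤ mult A P}

/-- The maximal multiplicity of a singular point of the arrangement. -/
def maxMult (A : Set Pt) : ℕ := sSup (mult A '' Sing A)

def Modular (A : Set Pt) (P : Pt) : Prop :=
  P ∈ Sing A ∧ ∀ Q ∈ Sing A, Q ≠ P → ∃ L ∈ A, onLine L P ∧ onLine L Q

def Supersolvable (A : Set Pt) : Prop := ∃ P, Modular A P

/-- The homogeneous radical ideal of a set of points. -/
def vanishingIdeal (Z : Set Pt) : Ideal S3 where
  carrier := {f | ∀ (v : Fin 3 → ℂ) (hv : v ≠ 0), Projectivization.mk ℂ v hv ∈ Z → eval v f = 0}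
  add_mem' := by
    intro f g hf hg v hv hvZ
    simp [hf v hv hvZ, hg v hv hvZ]
  zero_mem' := by
    intro v hv hvZ
    simp
  smul_mem' := by
    intro c f hf v hv hvZ
    simp [smul_eq_mul, hf v hv hvZ]

def pointIdeal (Q : Pt) : Ideal S3 := vanishingIdeal {Q}

def homogComponent (I : Ideal S3) (t : ℕ) : Submodule ℂ S3 :=
  (Submodule.restrictScalars ℂ I) ⊓ homogeneousSubmodule (Fin 3) ℂ t

/-- `dim_ℂ [I]_t`. -/
def dimHomog (I : Ideal S3) (t : ℕ) : ℕ := Module.finrank ℂ (homogComponent I t)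

/-- A property holds for all points in some nonempty Zariski-open subset of ℙ². -/
def Generically (Φ : Pt → Prop) : Prop :=
  ∃ g : S3, g ≠ 0 ∧ (∃ d, g.IsHomogeneous d) ∧ ∀ Q : Pt, eval Q.rep g ≠ 0 → Φ Q

/-- `Z` admits an unexpected curve of degree `j+1`. -/
def admitsUnexpectedDeg (Z : Set Pt) (j : ℕ) : Prop :=
  Generically fun Q =>
    dimHomog (vanishingIdeal Z ⊓ pointIdeal Q ^ j) (j + 1) >
      max (dimHomog (vanishingIdeal Z) (j + 1) - j * (j + 1) / 2) 0

def AdmitsUnexpected (Z : Set Pt) : Prop := ∃ j, 1 ≤ j ∧ admitsUnexpectedDeg Z j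

/-- The linear form defining the line `L`. -/
def linForm (L : Pt) : S3 := ∑ i, C (L.rep i) * X i

/-- The defining polynomial of a line arrangement. -/
def arrPoly (A : Set Pt) : S3 := ∏ᶠ L ∈ A, linForm L

/-- The arrangement `A` is free with exponents `(a, b)`. -/
def FreeWithExp (A : Set Pt) (a b : ℕ) : Prop :=
  ∃ u v : Fin 3 → S3,
    (∑ i, u i * pderiv i (arrPoly A) = 0) ∧
    (∑ i, v i * pderiv i (arrPoly A) = 0) ∧
    (∀ i, (u i).IsHomogeneous a) ∧ (∀ i, (v i).IsHomogeneous b) ∧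
    ∀ w : Fin 3 → S3, (∑ i, w i * pderiv i (arrPoly A) = 0) →
      ∃! pq : S3 × S3, w = pq.1 • u + pq.2 • v

def cvec (a b c : ℂ) : Fin 3 → ℂ := ![a, b, c]

lemma cvec_ne_zero₀ {a : ℂ} (h : a ≠ 0) (b c : ℂ) : cvec a b c ≠ 0 := by
  intro H; exact h (by simpa [cvec] using congrFun H 0)

lemma cvec_ne_zero₁ (a : ℂ) {b : ℂ} (h : b ≠ 0) (c : ℂ) : cvec a b c ≠ 0 := by
  intro H; exact h (by simpa [cvec] using congrFun H 1)

lemma cvec_ne_zero₂ (a b : ℂ) {c : ℂ} (h : c ≠ 0) : cvec a b c ≠ 0 := by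
  intro H; exact h (by simpa [cvec] using congrFun H 2)

def mkLine (a b c : ℂ) (h : cvec a b c ≠ 0) : Pt := Projectivization.mk ℂ (cvec a b c) h

/-- vector with two real first coordinates -/
def rvec (a b : ℝ) (c : ℂ) : Fin 3 → ℂ := ![(a : ℂ), (b : ℂ), c]

lemma rvec_ne_zero {a b : ℝ} (h : a ≠ 0 ∨ b ≠ 0) (c : ℂ) : rvec a b c ≠ 0 := by
  intro H
  rcases h with h | h
  · exact h (by exact_mod_cast (by simpa [rvec] using congrFun H 0 : (a : ℂ) = 0))
  · exact h (by exact_mod_cast (by simpa [rvec] using congrFun H 1 : (b : ℂ) = 0))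

lemma sincos_ne (θ : ℝ) : Real.cos θ ≠ 0 ∨ Real.sin θ ≠ 0 := by
  by_contra h
  push_neg at h
  have h1 := Real.sin_sq_add_cos_sq θ
  rw [h.2, h.1] at h1
  norm_num at h1

lemma sincos_ne' (θ : ℝ) : Real.sin θ ≠ 0 ∨ -Real.cos θ ≠ 0 := by
  rcases sincos_ne θ with h | h
  · exact Or.inr (neg_ne_zero.mpr h)
  · exact Or.inl h

/-- The line supporting the `k`-th side of the regular `N`-gon. -/
def sideLine (N k : ℕ) : Pt :=
  Projectivization.mk ℂ
    (rvec (Real.cos ((2 * (k : ℝ) + 1) * Real.pi / (N : ℝ)))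
      (Real.sin ((2 * (k : ℝ) + 1) * Real.pi / (N : ℝ)))
      (-((Real.cos (Real.pi / (N : ℝ)) : ℝ) : ℂ)))
    (rvec_ne_zero (sincos_ne _) _)

/-- The `k`-th symmetry axis of the regular `N`-gon. -/
def axisLine (N k : ℕ) : Pt :=
  Projectivization.mk ℂ
    (rvec (Real.sin ((k : ℝ) * Real.pi / (N : ℝ)))
      (-Real.cos ((k : ℝ) * Real.pi / (N : ℝ))) 0)
    (rvec_ne_zero (sincos_ne' _) _)

/-- The `N`-gonal arrangement `P_N`. -/
def PgonArr (N : ℕ) : Set Pt :=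
  {L | ∃ k < N, L = sideLine N k} ∪ {L | ∃ k < N, L = axisLine N k}

/-- The line `z = 0` at infinity (whose dual point, the center `(0:0:1)`, has the
same homogeneous coordinates). -/
def zLine : Pt := mkLine 0 0 1 (cvec_ne_zero₂ _ _ (by norm_num))

/-- The complete `N`-gonal arrangement. -/
def PbarArr (N : ℕ) : Set Pt := PgonArr N ∪ {zLine}

-- tic-tac-toe
def vertLine (i : ℤ) : Pt := mkLine 1 0 (-(i : ℂ)) (cvec_ne_zero₀ (by norm_num) _ _)
def horizLine (i : ℤ) : Pt := mkLine 0 1 (-(i : ℂ)) (cvec_ne_zero₁ _ (by norm_num) _)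
def diagLine (i : ℤ) : Pt := mkLine 1 (-1) (i : ℂ) (cvec_ne_zero₀ (by norm_num) _ _)
def antiDiagLine (i : ℤ) : Pt := mkLine 1 1 (i : ℂ) (cvec_ne_zero₀ (by norm_num) _ _)

/-- The complete tic-tac-toe arrangement `T̄_k^j`. -/
def TTT (k j : ℕ) : Set Pt :=
  {L | ∃ i : ℤ, -(k : ℤ) ≤ i ∧ i ≤ (k : ℤ) ∧ L = vertLine i} ∪
  {L | ∃ i : ℤ, -(k : ℤ) ≤ i ∧ i ≤ (k : ℤ) ∧ L = horizLine i} ∪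
  {L | ∃ i : ℤ, -(j : ℤ) ≤ i ∧ i ≤ (j : ℤ) ∧ L = diagLine i} ∪
  {L | ∃ i : ℤ, -(j : ℤ) ≤ i ∧ i ≤ (j : ℤ) ∧ L = antiDiagLine i} ∪
  {zLine}


section Infra

lemma rep_smul (v : Fin 3 → ℂ) (hv : v ≠ 0) :
    ∃ a : ℂˣ, (Projectivization.mk ℂ v hv).rep = (a : ℂ) • v := by
  obtain ⟨a, ha⟩ := Projectivization.exists_smul_eq_mk_rep ℂ v hv
  exact ⟨a, by rw [← ha]; rfl⟩

lemma cancel_unit {a x : ℂ} (ha : a ≠ 0) (h : a * x = 0) : x = 0 := by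
  rcases mul_eq_zero.mp h with h | h
  · exact absurd h ha
  · exact h

lemma onLine_mk_left (v : Fin 3 → ℂ) (hv : v ≠ 0) (P : Pt) :
    onLine (Projectivization.mk ℂ v hv) P ↔ ∑ i, v i * P.rep i = 0 := by
  obtain ⟨a, ha⟩ := rep_smul v hv
  unfold onLine
  rw [ha]
  have hsum : ∑ i, ((a : ℂ) • v) i * P.rep i = (a : ℂ) * ∑ i, v i * P.rep i := by
    rw [Finset.mul_sum]
    refine Finset.sum_congr rfl fun i _ => ?_
    simp [smul_eq_mul, mul_assoc]
  rw [hsum]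
  constructor
  · exact cancel_unit a.ne_zero
  · intro h; rw [h, mul_zero]

lemma onLine_mk_mk (v w : Fin 3 → ℂ) (hv : v ≠ 0) (hw : w ≠ 0) :
    onLine (Projectivization.mk ℂ v hv) (Projectivization.mk ℂ w hw) ↔
      ∑ i, v i * w i = 0 := by
  rw [onLine_mk_left]
  obtain ⟨a, ha⟩ := rep_smul w hw
  rw [ha]
  have hsum : ∑ i, v i * ((a : ℂ) • w) i = (a : ℂ) * ∑ i, v i * w i := by
    rw [Finset.mul_sum]
    refine Finset.sum_congr rfl fun i _ => ?_
    simp [smul_eq_mul]; ring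
  rw [hsum]
  constructor
  · exact cancel_unit a.ne_zero
  · intro h; rw [h, mul_zero]

end Infra

section Infra2

/-- The vertex `(1:0:1)` of the polygon. -/
def Vtx0 : Pt := Projectivization.mk ℂ (rvec 1 0 1) (rvec_ne_zero (Or.inl one_ne_zero) 1)

/-- The vertex `(cos 2π/N : sin 2π/N : 1)`. -/
def Vtx1 (N : ℕ) : Pt :=
  Projectivization.mk ℂ (rvec (Real.cos (2*Real.pi/N)) (Real.sin (2*Real.pi/N)) 1)
    (rvec_ne_zero (sincos_ne _) 1)

/-- The point at infinity of the `k`-th side. -/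
def Qinf (N k : ℕ) : Pt :=
  Projectivization.mk ℂ
    (rvec (-Real.sin ((2*(k:ℝ)+1)*Real.pi/N)) (Real.cos ((2*(k:ℝ)+1)*Real.pi/N)) 0)
    (rvec_ne_zero (by
      rcases sincos_ne ((2*(k:ℝ)+1)*Real.pi/N) with h | h
      · exact Or.inr h
      · exact Or.inl (neg_ne_zero.mpr h)) 0)

lemma onLine_side_iff (N k : ℕ) (P : Pt) :
    onLine (sideLine N k) P ↔
      (Real.cos ((2*(k:ℝ)+1)*Real.pi/N) : ℂ) * P.rep 0
        + (Real.sin ((2*(k:ℝ)+1)*Real.pi/N) : ℂ) * P.rep 1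
        - (Real.cos (Real.pi/N) : ℂ) * P.rep 2 = 0 := by
  rw [sideLine, onLine_mk_left, Fin.sum_univ_three]
  simp only [rvec, Matrix.cons_val_zero, Matrix.cons_val_one, Matrix.head_cons,
    Matrix.cons_val_two, Matrix.tail_cons]
  constructor <;> intro h <;> linear_combination h

lemma onLine_axis_iff (N m : ℕ) (P : Pt) :
    onLine (axisLine N m) P ↔
      (Real.sin ((m:ℝ)*Real.pi/N) : ℂ) * P.rep 0
        - (Real.cos ((m:ℝ)*Real.pi/N) : ℂ) * P.rep 1 = 0 := by
  rw [axisLine, onLine_mk_left, Fin.sum_univ_three]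
  simp only [rvec, Matrix.cons_val_zero, Matrix.cons_val_one, Matrix.head_cons,
    Matrix.cons_val_two, Matrix.tail_cons]
  push_cast
  constructor <;> intro h <;> linear_combination h

lemma onLine_zLine_iff (P : Pt) : onLine zLine P ↔ P.rep 2 = 0 := by
  rw [zLine, mkLine, onLine_mk_left, Fin.sum_univ_three]
  simp [cvec]

lemma NR_pos {N : ℕ} (hN : 3 ≤ N) : (0:ℝ) < N := by exact_mod_cast (by omega : 0 < N)

end Infra2

section RealHelpers

lemma sin_pos_frac {N : ℕ} (hN : 0 < N) {t : ℝ} (h0 : 0 < t) (h1 : t < N) :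
    0 < Real.sin (t * Real.pi / N) := by
  have hNR : (0:ℝ) < N := by exact_mod_cast hN
  apply Real.sin_pos_of_pos_of_lt_pi
  · positivity
  · rw [div_lt_iff₀ hNR]
    nlinarith [Real.pi_pos]

lemma cos_piN_pos {N : ℕ} (hN : 3 ≤ N) : 0 < Real.cos (Real.pi / N) := by
  have hNR : (0:ℝ) < N := by exact_mod_cast (by omega : 0 < N)
  have h3 : (3:ℝ) ≤ N := by exact_mod_cast hN
  apply Real.cos_pos_of_mem_Ioo
  constructor
  · have : (0:ℝ) < Real.pi / N := by positivity
    linarith [Real.pi_pos]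
  · rw [div_lt_div_iff₀ hNR (by norm_num : (0:ℝ) < 2)]
    nlinarith [Real.pi_pos]

lemma int_zero_of_bounds {Nz : ℤ} (hN : 0 < Nz) {n b : ℤ} (h : n * Nz = b)
    (h1 : -Nz < b) (h2 : b < Nz) : b = 0 := by
  rcases lt_trichotomy n 0 with h' | h' | h'
  · nlinarith
  · rw [h'] at h; simpa using h.symm
  · nlinarith

lemma sin_int_eq_zero {N : ℕ} (hN : 0 < N) {b : ℤ}
    (h : Real.sin ((b:ℝ) * Real.pi / N) = 0) (h1 : -(N:ℤ) < b) (h2 : b < N) : b = 0 := by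
  rw [Real.sin_eq_zero_iff] at h
  obtain ⟨n, hn⟩ := h
  have hNe : (N:ℝ) ≠ 0 := by exact_mod_cast (by omega : N ≠ 0)
  have hπ := Real.pi_ne_zero
  have hr : (n:ℝ) * N = b := by
    field_simp at hn
    apply mul_right_cancel₀ hπ
    linear_combination Real.pi * hn
  have hint : n * (N:ℤ) = b := by exact_mod_cast hr
  exact int_zero_of_bounds (by exact_mod_cast hN) hint h1 h2

lemma cos_int_ne_zero_of_odd {N : ℕ} (hN : 0 < N) (hodd : N % 2 = 1) (b : ℤ) :
    Real.cos ((b:ℝ) * Real.pi / N) ≠ 0 := by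
  intro h
  rw [Real.cos_eq_zero_iff] at h
  obtain ⟨k, hk⟩ := h
  have hNe : (N:ℝ) ≠ 0 := by exact_mod_cast (by omega : N ≠ 0)
  have hπ := Real.pi_ne_zero
  have hr : (2*b : ℝ) = (2*(k:ℝ)+1) * N := by
    field_simp at hk
    apply mul_right_cancel₀ hπ
    linear_combination Real.pi * hk
  have hint : 2*b = (2*k+1) * (N:ℤ) := by exact_mod_cast hr
  have h2 : ∃ c : ℤ, 2*c = N := ⟨b - k*N, by linear_combination hint⟩
  obtain ⟨c, h2⟩ := h2
  omega

lemma solve22 {a b c d x y : ℂ} (h1 : a*x + b*y = 0) (h2 : c*x + d*y = 0)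
    (hdet : a*d - b*c ≠ 0) : x = 0 ∧ y = 0 := by
  constructor
  · apply cancel_unit hdet; linear_combination d*h1 - b*h2
  · apply cancel_unit hdet; linear_combination a*h2 - c*h1

end RealHelpers
section Pair

/-- If a point lies on two distinct sides `j ≠ k`, it satisfies the equation of the
axis direction `(j+k+1)π/N`. -/
lemma sides_pair {N j k : ℕ} (hN : 0 < N) (hj : j < N) (hk : k < N) (hjk : j ≠ k)
    {p0 p1 p2 : ℂ}
    (hA : (Real.cos ((2*(j:ℝ)+1)*Real.pi/N) : ℂ) * p0
        + (Real.sin ((2*(j:ℝ)+1)*Real.pi/N) : ℂ) * p1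
        - (Real.cos (Real.pi/N) : ℂ) * p2 = 0)
    (hB : (Real.cos ((2*(k:ℝ)+1)*Real.pi/N) : ℂ) * p0
        + (Real.sin ((2*(k:ℝ)+1)*Real.pi/N) : ℂ) * p1
        - (Real.cos (Real.pi/N) : ℂ) * p2 = 0) :
    (Real.sin (((j:ℝ)+k+1)*Real.pi/N) : ℂ) * p0
      - (Real.cos (((j:ℝ)+k+1)*Real.pi/N) : ℂ) * p1 = 0 := by
  set φ : ℝ := ((j:ℝ)+k+1)*Real.pi/N with hφ
  set δ : ℝ := ((j:ℝ)-k)*Real.pi/N with hδ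
  have e1 : (2*(j:ℝ)+1)*Real.pi/N = φ + δ := by rw [hφ, hδ]; ring
  have e2 : (2*(k:ℝ)+1)*Real.pi/N = φ - δ := by rw [hφ, hδ]; ring
  rw [e1, Real.cos_add, Real.sin_add] at hA
  rw [e2, Real.cos_sub, Real.sin_sub] at hB
  have hsδ : Real.sin δ ≠ 0 := by
    rcases Nat.lt_or_ge j k with h | h
    · have hk' : 0 < (k:ℝ) - j := by
        have : (j:ℝ) < k := by exact_mod_cast h
        linarith
      have : 0 < Real.sin (((k:ℝ)-j)*Real.pi/N) := by
        apply sin_pos_frac hN hk'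
        have : (k:ℝ) < N := by exact_mod_cast hk
        have : (0:ℝ) ≤ j := by positivity
        linarith
      have hneg : δ = -(((k:ℝ)-j)*Real.pi/N) := by rw [hδ]; ring
      rw [hneg, Real.sin_neg]
      exact neg_ne_zero.mpr (ne_of_gt this)
    · have hj' : 0 < (j:ℝ) - k := by
        have h' : k < j := lt_of_le_of_ne h (Ne.symm hjk)
        have : (k:ℝ) < j := by exact_mod_cast h'
        linarith
      have : 0 < Real.sin (((j:ℝ)-k)*Real.pi/N) := by
        apply sin_pos_frac hN hj'
        have : (j:ℝ) < N := by exact_mod_cast hj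
        have : (0:ℝ) ≤ k := by positivity
        linarith
      rw [hδ]
      exact ne_of_gt this
  have key : (2*(Real.sin δ) : ℂ) * ((Real.sin φ : ℂ) * p0 - (Real.cos φ : ℂ) * p1) = 0 := by
    push_cast at hA hB ⊢
    linear_combination hB - hA
  apply cancel_unit _ key
  simp only [ne_eq, mul_eq_zero]
  push_neg
  constructor
  · norm_num
  · exact_mod_cast hsδ

lemma sin_nat_mod {N : ℕ} (hN : 0 < N) (s : ℕ) :
    Real.sin ((s:ℝ)*Real.pi/N) = (-1)^(s/N) * Real.sin (((s % N : ℕ):ℝ)*Real.pi/N) := by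
  have hNe : (N:ℝ) ≠ 0 := by exact_mod_cast (by omega : N ≠ 0)
  have e : (s:ℝ)*Real.pi/N = ((s % N : ℕ):ℝ)*Real.pi/N + (s/N : ℕ)*Real.pi := by
    have hs : (s:ℝ) = ((s % N : ℕ):ℝ) + ((s/N : ℕ):ℝ) * N := by
      exact_mod_cast (Nat.mod_add_div' s N).symm
    field_simp
    rw [hs]; ring
  rw [e, Real.sin_add_nat_mul_pi]

lemma cos_nat_mod {N : ℕ} (hN : 0 < N) (s : ℕ) :
    Real.cos ((s:ℝ)*Real.pi/N) = (-1)^(s/N) * Real.cos (((s % N : ℕ):ℝ)*Real.pi/N) := by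
  have hNe : (N:ℝ) ≠ 0 := by exact_mod_cast (by omega : N ≠ 0)
  have e : (s:ℝ)*Real.pi/N = ((s % N : ℕ):ℝ)*Real.pi/N + (s/N : ℕ)*Real.pi := by
    have hs : (s:ℝ) = ((s % N : ℕ):ℝ) + ((s/N : ℕ):ℝ) * N := by
      exact_mod_cast (Nat.mod_add_div' s N).symm
    field_simp
    rw [hs]; ring
  rw [e, Real.cos_add_nat_mul_pi]

end Pair
section SetTools

lemma finite_PbarArr (N : ℕ) : (PbarArr N).Finite := by
  have h1 : {L | ∃ k < N, L = sideLine N k} ⊆ sideLine N '' (Set.Iio N) := by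
    rintro L ⟨k, hk, rfl⟩; exact ⟨k, hk, rfl⟩
  have h2 : {L | ∃ k < N, L = axisLine N k} ⊆ axisLine N '' (Set.Iio N) := by
    rintro L ⟨k, hk, rfl⟩; exact ⟨k, hk, rfl⟩
  have f1 : ({L | ∃ k < N, L = sideLine N k} : Set Pt).Finite :=
    ((Set.finite_Iio N).image _).subset h1
  have f2 : ({L | ∃ k < N, L = axisLine N k} : Set Pt).Finite :=
    ((Set.finite_Iio N).image _).subset h2
  exact ((f1.union f2).union (Set.finite_singleton _))

lemma mem_sing_of_two {A : Set Pt} (hA : A.Finite) {P L1 L2 : Pt} (h12 : L1 ≠ L2)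
    (m1 : L1 ∈ A) (m2 : L2 ∈ A) (o1 : onLine L1 P) (o2 : onLine L2 P) : P ∈ Sing A := by
  show 2 ≤ mult A P
  unfold mult
  have hsub : ({L1, L2} : Set Pt) ⊆ {L ∈ A | onLine L P} := by
    rintro x (rfl | rfl)
    · exact ⟨m1, o1⟩
    · exact ⟨m2, o2⟩
  calc 2 = ({L1, L2} : Set Pt).ncard := (Set.ncard_pair h12).symm
    _ ≤ _ := Set.ncard_le_ncard hsub (hA.sep _)

lemma exists_two_lines {A : Set Pt} (hA : A.Finite) {P : Pt} (h : P ∈ Sing A) :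
    ∃ L1 L2, L1 ∈ A ∧ L2 ∈ A ∧ onLine L1 P ∧ onLine L2 P ∧ L1 ≠ L2 := by
  have h2 : 1 < ({L ∈ A | onLine L P}).ncard := by
    have := h
    simp only [Sing, Set.mem_setOf_eq, mult] at this
    omega
  obtain ⟨a, b, ha, hb, hab⟩ := (Set.one_lt_ncard_iff (hA.sep _)).mp h2
  exact ⟨a, b, ha.1, hb.1, ha.2, hb.2, hab⟩

lemma rep_of_eq_mk {P : Pt} {w : Fin 3 → ℂ} {hw : w ≠ 0}
    (h : P = Projectivization.mk ℂ w hw) : ∃ a : ℂˣ, P.rep = (a : ℂ) • w := by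
  subst h; exact rep_smul w hw

lemma ne_mk_of_rep2_zero {P : Pt} {w : Fin 3 → ℂ} {hw : w ≠ 0} (h2 : P.rep 2 = 0)
    (hw2 : w 2 ≠ 0) : P ≠ Projectivization.mk ℂ w hw := by
  intro h
  obtain ⟨a, ha⟩ := rep_of_eq_mk h
  have := congrFun ha 2
  simp only [Pi.smul_apply, smul_eq_mul, h2] at this
  rcases mul_eq_zero.mp this.symm with h' | h'
  · exact a.ne_zero h'
  · exact hw2 h' 

lemma ne_mk_of_rep2_ne_zero {P : Pt} {w : Fin 3 → ℂ} {hw : w ≠ 0} (h2 : P.rep 2 ≠ 0)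
    (hw2 : w 2 = 0) : P ≠ Projectivization.mk ℂ w hw := by
  intro h
  obtain ⟨a, ha⟩ := rep_of_eq_mk h
  have := congrFun ha 2
  simp only [Pi.smul_apply, smul_eq_mul, hw2, mul_zero] at this
  exact h2 this

end SetTools
section Incidence

lemma fin3simp : True := trivial

lemma onLine_axis_center (N m : ℕ) : onLine (axisLine N m) zLine := by
  rw [axisLine, zLine, mkLine, onLine_mk_mk, Fin.sum_univ_three]
  simp [rvec, cvec]

lemma not_onLine_side_center {N : ℕ} (hN : 3 ≤ N) (k : ℕ) :
    ¬ onLine (sideLine N k) zLine := by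
  rw [sideLine, zLine, mkLine, onLine_mk_mk, Fin.sum_univ_three]
  simp only [rvec, cvec, Matrix.cons_val_zero, Matrix.cons_val_one, Matrix.head_cons,
    Matrix.cons_val_two, Matrix.tail_cons, mul_zero, zero_add, mul_one, zero_mul, add_zero]
  intro h
  have : Real.cos (Real.pi / N) = 0 := by
    have h' : ((Real.cos (Real.pi / N) : ℝ) : ℂ) = 0 := by
      have := neg_eq_zero.mp (by exact_mod_cast h)
      exact_mod_cast this
    exact_mod_cast h'
  exact (ne_of_gt (cos_piN_pos hN)) this

lemma not_onLine_z_center : ¬ onLine zLine zLine := by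
  rw [zLine, mkLine, onLine_mk_mk, Fin.sum_univ_three]
  simp [cvec]

lemma onLine_side0_Vtx0 {N : ℕ} (hN : 3 ≤ N) : onLine (sideLine N 0) Vtx0 := by
  rw [sideLine, Vtx0, onLine_mk_mk, Fin.sum_univ_three]
  simp only [rvec, Matrix.cons_val_zero, Matrix.cons_val_one, Matrix.head_cons,
    Matrix.cons_val_two, Matrix.tail_cons]
  push_cast
  ring_nf

lemma onLine_sideLast_Vtx0 {N : ℕ} (hN : 3 ≤ N) : onLine (sideLine N (N-1)) Vtx0 := by
  rw [sideLine, Vtx0, onLine_mk_mk, Fin.sum_univ_three]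
  simp only [rvec, Matrix.cons_val_zero, Matrix.cons_val_one, Matrix.head_cons,
    Matrix.cons_val_two, Matrix.tail_cons]
  have hNe : (N:ℝ) ≠ 0 := by exact_mod_cast (by omega : N ≠ 0)
  have e : (2*((N-1 : ℕ):ℝ)+1)*Real.pi/N = 2*Real.pi - Real.pi/N := by
    have : ((N-1 : ℕ):ℝ) = (N:ℝ) - 1 := by
      have : (1:ℕ) ≤ N := by omega
      push_cast [Nat.cast_sub this]
      ring
    rw [this]
    field_simp
    ring
  rw [e, Real.cos_two_pi_sub]
  push_cast
  ring

lemma onLine_side0_Vtx1 {N : ℕ} (hN : 3 ≤ N) : onLine (sideLine N 0) (Vtx1 N) := by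
  rw [sideLine, Vtx1, onLine_mk_mk, Fin.sum_univ_three]
  simp only [rvec, Matrix.cons_val_zero, Matrix.cons_val_one, Matrix.head_cons,
    Matrix.cons_val_two, Matrix.tail_cons]
  have hr : Real.cos ((2*((0:ℕ):ℝ)+1)*Real.pi/N) * Real.cos (2*Real.pi/N)
      + Real.sin ((2*((0:ℕ):ℝ)+1)*Real.pi/N) * Real.sin (2*Real.pi/N)
      - Real.cos (Real.pi/N) = 0 := by
    rw [← Real.cos_sub]
    norm_num
    rw [show Real.pi/(N:ℝ) - 2*Real.pi/N = -(Real.pi/N) by ring, Real.cos_neg]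
    ring
  have hc := congrArg (fun r : ℝ => (r : ℂ)) hr
  simp only [Complex.ofReal_mul, Complex.ofReal_add, Complex.ofReal_sub,
    Complex.ofReal_zero] at hc
  linear_combination hc

lemma onLine_side1_Vtx1 {N : ℕ} (hN : 3 ≤ N) : onLine (sideLine N 1) (Vtx1 N) := by
  rw [sideLine, Vtx1, onLine_mk_mk, Fin.sum_univ_three]
  simp only [rvec, Matrix.cons_val_zero, Matrix.cons_val_one, Matrix.head_cons,
    Matrix.cons_val_two, Matrix.tail_cons]
  have hr : Real.cos ((2*((1:ℕ):ℝ)+1)*Real.pi/N) * Real.cos (2*Real.pi/N)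
      + Real.sin ((2*((1:ℕ):ℝ)+1)*Real.pi/N) * Real.sin (2*Real.pi/N)
      - Real.cos (Real.pi/N) = 0 := by
    rw [← Real.cos_sub]
    norm_num
    rw [show (3:ℝ)*Real.pi/(N:ℝ) - 2*Real.pi/N = Real.pi/N by ring]
    ring
  have hc := congrArg (fun r : ℝ => (r : ℂ)) hr
  simp only [Complex.ofReal_mul, Complex.ofReal_add, Complex.ofReal_sub,
    Complex.ofReal_zero] at hc
  linear_combination hc

lemma onLine_side_Qinf (N k : ℕ) : onLine (sideLine N k) (Qinf N k) := by
  rw [sideLine, Qinf, onLine_mk_mk, Fin.sum_univ_three]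
  simp only [rvec, Matrix.cons_val_zero, Matrix.cons_val_one, Matrix.head_cons,
    Matrix.cons_val_two, Matrix.tail_cons]
  push_cast
  ring

lemma onLine_z_Qinf (N k : ℕ) : onLine zLine (Qinf N k) := by
  rw [zLine, mkLine, Qinf, onLine_mk_mk, Fin.sum_univ_three]
  simp [cvec, rvec]

end Incidence
section Distinct

lemma mem_side {N k : ℕ} (hk : k < N) : sideLine N k ∈ PbarArr N :=
  Or.inl (Or.inl ⟨k, hk, rfl⟩)

lemma mem_axis {N m : ℕ} (hm : m < N) : axisLine N m ∈ PbarArr N :=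
  Or.inl (Or.inr ⟨m, hm, rfl⟩)

lemma mem_z (N : ℕ) : zLine ∈ PbarArr N := Or.inr rfl

lemma smul_coord {a : ℂˣ} {v w : Fin 3 → ℂ} (h : a • w = v) (i : Fin 3) :
    (a:ℂ) * w i = v i := by
  have := congrFun h i
  simpa [Units.smul_def] using this

lemma rvec0 (a b : ℝ) (c : ℂ) : rvec a b c 0 = (a:ℂ) := rfl
lemma rvec1 (a b : ℝ) (c : ℂ) : rvec a b c 1 = (b:ℂ) := rfl
lemma rvec2 (a b : ℝ) (c : ℂ) : rvec a b c 2 = c := rfl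
lemma cvec0 (a b c : ℂ) : cvec a b c 0 = a := rfl
lemma cvec1 (a b c : ℂ) : cvec a b c 1 = b := rfl
lemma cvec2 (a b c : ℂ) : cvec a b c 2 = c := rfl

lemma sin_piN_pos {N : ℕ} (hN : 3 ≤ N) : 0 < Real.sin (Real.pi/N) := by
  have := sin_pos_frac (show 0 < N by omega) (show (0:ℝ) < 1 by norm_num)
    (show (1:ℝ) < N by exact_mod_cast (by omega : 1 < N))
  simpa using this

lemma sin_2piN_pos {N : ℕ} (hN : 3 ≤ N) : 0 < Real.sin (2*Real.pi/N) := by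
  have := sin_pos_frac (show 0 < N by omega) (show (0:ℝ) < 2 by norm_num)
    (show (2:ℝ) < N by exact_mod_cast (by omega : 2 < N))
  simpa using this

lemma side_ne_z {N : ℕ} (hN : 3 ≤ N) (k : ℕ) : sideLine N k ≠ zLine := by
  rw [sideLine, zLine, mkLine]
  intro heq
  rw [Projectivization.mk_eq_mk_iff] at heq
  obtain ⟨a, ha⟩ := heq
  have h0 := smul_coord ha 0
  have h1 := smul_coord ha 1
  rw [cvec0, rvec0, mul_zero] at h0
  rw [cvec1, rvec1, mul_zero] at h1
  rcases sincos_ne ((2*(k:ℝ)+1)*Real.pi/N) with h | h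
  · exact h (by exact_mod_cast h0.symm)
  · exact h (by exact_mod_cast h1.symm)

lemma axis0_ne_axis1 {N : ℕ} (hN : 3 ≤ N) : axisLine N 0 ≠ axisLine N 1 := by
  rw [axisLine, axisLine]
  intro heq
  rw [Projectivization.mk_eq_mk_iff] at heq
  obtain ⟨a, ha⟩ := heq
  have h0 := smul_coord ha 0
  rw [rvec0, rvec0] at h0
  have hz : Real.sin (((0:ℕ):ℝ)*Real.pi/N) = 0 := by
    norm_num
  rw [hz] at h0
  have hs : Real.sin (((1:ℕ):ℝ)*Real.pi/N) ≠ 0 := by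
    have := sin_piN_pos hN
    have e : ((1:ℕ):ℝ)*Real.pi/N = Real.pi/N := by push_cast; ring
    rw [e]
    exact ne_of_gt this
  simp only [Complex.ofReal_zero] at h0
  rcases mul_eq_zero.mp h0 with h | h
  · exact a.ne_zero h
  · exact hs (by exact_mod_cast h)

lemma side0_ne_side1 {N : ℕ} (hN : 3 ≤ N) : sideLine N 0 ≠ sideLine N 1 := by
  rw [sideLine, sideLine]
  intro heq
  rw [Projectivization.mk_eq_mk_iff] at heq
  obtain ⟨a, ha⟩ := heq
  have h0 := smul_coord ha 0
  have h2 := smul_coord ha 2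
  rw [rvec0, rvec0] at h0
  rw [rvec2, rvec2] at h2
  have hcπ : ((Real.cos (Real.pi/N) : ℝ) : ℂ) ≠ 0 := by
    exact_mod_cast ne_of_gt (cos_piN_pos hN)
  have ha1 : (a:ℂ) = 1 := by
    apply mul_right_cancel₀ (neg_ne_zero.mpr hcπ)
    rw [h2]; ring
  rw [ha1, one_mul] at h0
  have hr : Real.cos ((2*((1:ℕ):ℝ)+1)*Real.pi/N) = Real.cos ((2*((0:ℕ):ℝ)+1)*Real.pi/N) := by
    exact_mod_cast h0
  have hzero : Real.cos ((2*((1:ℕ):ℝ)+1)*Real.pi/N) - Real.cos ((2*((0:ℕ):ℝ)+1)*Real.pi/N) = 0 := by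
    rw [hr]; ring
  rw [Real.cos_sub_cos] at hzero
  have e1 : ((2*((1:ℕ):ℝ)+1)*Real.pi/N + (2*((0:ℕ):ℝ)+1)*Real.pi/N)/2 = 2*Real.pi/N := by
    push_cast; ring
  have e2 : ((2*((1:ℕ):ℝ)+1)*Real.pi/N - (2*((0:ℕ):ℝ)+1)*Real.pi/N)/2 = Real.pi/N := by
    push_cast; ring
  rw [e1, e2] at hzero
  nlinarith [sin_piN_pos hN, sin_2piN_pos hN]

lemma side0_ne_sideLast {N : ℕ} (hN : 3 ≤ N) : sideLine N 0 ≠ sideLine N (N-1) := by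
  rw [sideLine, sideLine]
  intro heq
  rw [Projectivization.mk_eq_mk_iff] at heq
  obtain ⟨a, ha⟩ := heq
  have h1 := smul_coord ha 1
  have h2 := smul_coord ha 2
  rw [rvec1, rvec1] at h1
  rw [rvec2, rvec2] at h2
  have hcπ : ((Real.cos (Real.pi/N) : ℝ) : ℂ) ≠ 0 := by
    exact_mod_cast ne_of_gt (cos_piN_pos hN)
  have ha1 : (a:ℂ) = 1 := by
    apply mul_right_cancel₀ (neg_ne_zero.mpr hcπ)
    rw [h2]; ring
  rw [ha1, one_mul] at h1
  have e : (2*((N-1 : ℕ):ℝ)+1)*Real.pi/N = 2*Real.pi - Real.pi/N := by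
    have hc : ((N-1 : ℕ):ℝ) = (N:ℝ) - 1 := by
      have h1N : (1:ℕ) ≤ N := by omega
      push_cast [Nat.cast_sub h1N]; ring
    have hNe : (N:ℝ) ≠ 0 := by exact_mod_cast (by omega : N ≠ 0)
    rw [hc]; field_simp; ring
  rw [e, Real.sin_two_pi_sub] at h1
  have hr : -Real.sin (Real.pi/N) = Real.sin ((2*((0:ℕ):ℝ)+1)*Real.pi/N) := by
    exact_mod_cast h1
  have e0 : (2*((0:ℕ):ℝ)+1)*Real.pi/N = Real.pi/N := by push_cast; ring
  rw [e0] at hr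
  linarith [sin_piN_pos hN]

end Distinct
section Through

lemma sin_int_exists {N : ℕ} (hN : 0 < N) {b : ℤ}
    (h : Real.sin ((b:ℝ) * Real.pi / N) = 0) : ∃ n : ℤ, n * (N:ℤ) = b := by
  rw [Real.sin_eq_zero_iff] at h
  obtain ⟨n, hn⟩ := h
  have hNe : (N:ℝ) ≠ 0 := by exact_mod_cast (by omega : N ≠ 0)
  have hπ := Real.pi_ne_zero
  have hr : (n:ℝ) * N = b := by
    field_simp at hn
    apply mul_right_cancel₀ hπ
    linear_combination Real.pi * hn
  exact ⟨n, by exact_mod_cast hr⟩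

lemma center_sing {N : ℕ} (hN : 3 ≤ N) : zLine ∈ Sing (PbarArr N) :=
  mem_sing_of_two (finite_PbarArr N) (axis0_ne_axis1 hN)
    (mem_axis (by omega)) (mem_axis (by omega))
    (onLine_axis_center N 0) (onLine_axis_center N 1)

lemma vtx0_sing {N : ℕ} (hN : 3 ≤ N) : Vtx0 ∈ Sing (PbarArr N) :=
  mem_sing_of_two (finite_PbarArr N) (side0_ne_sideLast hN)
    (mem_side (by omega)) (mem_side (by omega))
    (onLine_side0_Vtx0 hN) (onLine_sideLast_Vtx0 hN)

lemma vtx1_sing {N : ℕ} (hN : 3 ≤ N) : Vtx1 N ∈ Sing (PbarArr N) :=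
  mem_sing_of_two (finite_PbarArr N) (side0_ne_side1 hN)
    (mem_side (by omega)) (mem_side (by omega))
    (onLine_side0_Vtx1 hN) (onLine_side1_Vtx1 hN)

lemma qinf_sing {N k : ℕ} (hN : 3 ≤ N) (hk : k < N) : Qinf N k ∈ Sing (PbarArr N) :=
  mem_sing_of_two (finite_PbarArr N) (side_ne_z hN k)
    (mem_side hk) (mem_z N)
    (onLine_side_Qinf N k) (onLine_z_Qinf N k)

lemma through_center {N : ℕ} (hN : 3 ≤ N) {L : Pt} (hL : L ∈ PbarArr N)
    (h : onLine L zLine) : ∃ m < N, L = axisLine N m := by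
  rcases hL with (⟨k, hk, rfl⟩ | ⟨m, hm, rfl⟩) | hL
  · exact absurd h (not_onLine_side_center hN k)
  · exact ⟨m, hm, rfl⟩
  · rw [Set.mem_singleton_iff] at hL
    subst hL
    exact absurd h not_onLine_z_center

lemma through_Vtx0 {N : ℕ} (hN : 3 ≤ N) {L : Pt} (hL : L ∈ PbarArr N)
    (h : onLine L Vtx0) :
    L = sideLine N 0 ∨ L = sideLine N (N-1) ∨ L = axisLine N 0 := by
  rcases hL with (⟨k, hk, rfl⟩ | ⟨m, hm, rfl⟩) | hL
  · -- side k through (1,0,1): cos θ_k = cos π/N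
    rw [sideLine, Vtx0, onLine_mk_mk, Fin.sum_univ_three, rvec0, rvec0, rvec1, rvec1,
      rvec2, rvec2] at h
    have hr : Real.cos ((2*(k:ℝ)+1)*Real.pi/N) - Real.cos (Real.pi/N) = 0 := by
      have : ((Real.cos ((2*(k:ℝ)+1)*Real.pi/N) - Real.cos (Real.pi/N) : ℝ) : ℂ) = 0 := by
        simp only [Complex.ofReal_sub, Complex.ofReal_one, Complex.ofReal_zero] at h ⊢
        linear_combination h
      exact_mod_cast this
    rw [Real.cos_sub_cos] at hr
    rw [show ((2*(k:ℝ)+1)*Real.pi/N + Real.pi/N)/2 = ((k:ℝ)+1)*Real.pi/N by ring,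
        show ((2*(k:ℝ)+1)*Real.pi/N - Real.pi/N)/2 = (k:ℝ)*Real.pi/N by ring] at hr
    have hr' : Real.sin (((k:ℝ)+1)*Real.pi/N) = 0 ∨ Real.sin ((k:ℝ)*Real.pi/N) = 0 := by
      rcases mul_eq_zero.mp hr with h' | h'
      · rcases mul_eq_zero.mp h' with h'' | h''
        · norm_num at h''
        · exact Or.inl h''
      · exact Or.inr h'
    rcases hr' with h' | h'
    · by_cases hkN : k + 1 = N
      · right; left
        have : k = N - 1 := by omega
        rw [this]
      · exfalso
        have hb : ((k:ℤ)+1 : ℤ) = 0 := by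
          apply sin_int_eq_zero (show 0 < N by omega)
          · push_cast
            exact h' 
          · omega
          · omega
        omega
    · left
      have hb : (k:ℤ) = 0 := by
        apply sin_int_eq_zero (show 0 < N by omega)
        · push_cast
          exact h'
        · omega
        · omega
      have : k = 0 := by exact_mod_cast hb
      rw [this]
  · -- axis m through (1,0,1): sin(mπ/N) = 0
    rw [axisLine, Vtx0, onLine_mk_mk, Fin.sum_univ_three, rvec0, rvec0, rvec1, rvec1,
      rvec2, rvec2] at h
    right; right
    have hr : Real.sin ((m:ℝ)*Real.pi/N) = 0 := by
      have : ((Real.sin ((m:ℝ)*Real.pi/N) : ℝ) : ℂ) = 0 := by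
        simp only [Complex.ofReal_neg, Complex.ofReal_one, Complex.ofReal_zero] at h ⊢
        linear_combination h
      exact_mod_cast this
    have hb : (m:ℤ) = 0 := by
      apply sin_int_eq_zero (show 0 < N by omega)
      · push_cast; exact hr
      · omega
      · omega
    have : m = 0 := by exact_mod_cast hb
    rw [this]
  · rw [Set.mem_singleton_iff] at hL
    subst hL
    exfalso
    rw [zLine, mkLine, Vtx0, onLine_mk_mk, Fin.sum_univ_three, cvec0, cvec1, cvec2,
      rvec0, rvec1, rvec2] at h
    norm_num at h

end Through
section Through2

lemma through_Vtx1 {N : ℕ} (hN : 3 ≤ N) {L : Pt} (hL : L ∈ PbarArr N)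
    (h : onLine L (Vtx1 N)) :
    L = sideLine N 0 ∨ L = sideLine N 1 ∨ L = axisLine N 2 := by
  rcases hL with (⟨k, hk, rfl⟩ | ⟨m, hm, rfl⟩) | hL
  · rw [sideLine, Vtx1, onLine_mk_mk, Fin.sum_univ_three, rvec0, rvec0, rvec1, rvec1,
      rvec2, rvec2] at h
    have hr : Real.cos ((2*(k:ℝ)+1)*Real.pi/N) * Real.cos (2*Real.pi/N)
        + Real.sin ((2*(k:ℝ)+1)*Real.pi/N) * Real.sin (2*Real.pi/N)
        - Real.cos (Real.pi/N) = 0 := by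
      have : ((Real.cos ((2*(k:ℝ)+1)*Real.pi/N) * Real.cos (2*Real.pi/N)
          + Real.sin ((2*(k:ℝ)+1)*Real.pi/N) * Real.sin (2*Real.pi/N)
          - Real.cos (Real.pi/N) : ℝ) : ℂ) = 0 := by
        simp only [Complex.ofReal_sub, Complex.ofReal_add, Complex.ofReal_mul,
          Complex.ofReal_one, Complex.ofReal_zero] at h ⊢
        linear_combination h
      exact_mod_cast this
    rw [← Real.cos_sub] at hr
    rw [Real.cos_sub_cos] at hr
    rw [show (((2*(k:ℝ)+1)*Real.pi/N - 2*Real.pi/N) + Real.pi/N)/2 = (k:ℝ)*Real.pi/N by ring,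
        show (((2*(k:ℝ)+1)*Real.pi/N - 2*Real.pi/N) - Real.pi/N)/2 = ((k:ℝ)-1)*Real.pi/N by ring]
      at hr
    have hr' : Real.sin ((k:ℝ)*Real.pi/N) = 0 ∨ Real.sin (((k:ℝ)-1)*Real.pi/N) = 0 := by
      rcases mul_eq_zero.mp hr with h' | h'
      · rcases mul_eq_zero.mp h' with h'' | h''
        · norm_num at h''
        · exact Or.inl h''
      · exact Or.inr h'
    rcases hr' with h' | h'
    · left
      have hb : (k:ℤ) = 0 := by
        apply sin_int_eq_zero (show 0 < N by omega)
        · push_cast; exact h'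
        · omega
        · omega
      have : k = 0 := by exact_mod_cast hb
      rw [this]
    · right; left
      have hb : (k:ℤ) - 1 = 0 := by
        apply sin_int_eq_zero (show 0 < N by omega)
        · push_cast; exact h'
        · omega
        · omega
      have : k = 1 := by omega
      rw [this]
  · right; right
    rw [axisLine, Vtx1, onLine_mk_mk, Fin.sum_univ_three, rvec0, rvec0, rvec1, rvec1,
      rvec2, rvec2] at h
    have hr : Real.sin ((m:ℝ)*Real.pi/N) * Real.cos (2*Real.pi/N)
        - Real.cos ((m:ℝ)*Real.pi/N) * Real.sin (2*Real.pi/N) = 0 := by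
      have : ((Real.sin ((m:ℝ)*Real.pi/N) * Real.cos (2*Real.pi/N)
          - Real.cos ((m:ℝ)*Real.pi/N) * Real.sin (2*Real.pi/N) : ℝ) : ℂ) = 0 := by
        simp only [Complex.ofReal_sub, Complex.ofReal_mul, Complex.ofReal_neg,
          Complex.ofReal_one, Complex.ofReal_zero] at h ⊢
        linear_combination h
      exact_mod_cast this
    rw [← Real.sin_sub] at hr
    rw [show (m:ℝ)*Real.pi/N - 2*Real.pi/N = ((m:ℝ)-2)*Real.pi/N by ring] at hr
    have hb : (m:ℤ) - 2 = 0 := by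
      apply sin_int_eq_zero (show 0 < N by omega)
      · push_cast; exact hr
      · omega
      · omega
    have : m = 2 := by omega
    rw [this]
  · rw [Set.mem_singleton_iff] at hL
    subst hL
    exfalso
    rw [zLine, mkLine, Vtx1, onLine_mk_mk, Fin.sum_univ_three, cvec0, cvec1, cvec2,
      rvec0, rvec1, rvec2] at h
    norm_num at h

lemma through_Qinf {N : ℕ} (hN : 3 ≤ N) (hodd : N % 2 = 1) {k : ℕ} (hk : k < N)
    {L : Pt} (hL : L ∈ PbarArr N) (h : onLine L (Qinf N k)) :
    L = sideLine N k ∨ L = zLine := by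
  rcases hL with (⟨j, hj, rfl⟩ | ⟨m, hm, rfl⟩) | hL
  · left
    rw [sideLine, Qinf, onLine_mk_mk, Fin.sum_univ_three, rvec0, rvec0, rvec1, rvec1,
      rvec2, rvec2] at h
    have hr : Real.sin ((2*(j:ℝ)+1)*Real.pi/N) * Real.cos ((2*(k:ℝ)+1)*Real.pi/N)
        - Real.cos ((2*(j:ℝ)+1)*Real.pi/N) * Real.sin ((2*(k:ℝ)+1)*Real.pi/N) = 0 := by
      have : ((Real.sin ((2*(j:ℝ)+1)*Real.pi/N) * Real.cos ((2*(k:ℝ)+1)*Real.pi/N)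
          - Real.cos ((2*(j:ℝ)+1)*Real.pi/N) * Real.sin ((2*(k:ℝ)+1)*Real.pi/N) : ℝ) : ℂ) = 0 := by
        simp only [Complex.ofReal_sub, Complex.ofReal_mul, Complex.ofReal_neg,
          Complex.ofReal_one, Complex.ofReal_zero] at h ⊢
        linear_combination h
      exact_mod_cast this
    rw [← Real.sin_sub] at hr
    rw [show (2*(j:ℝ)+1)*Real.pi/N - (2*(k:ℝ)+1)*Real.pi/N
        = ((2*(j:ℝ)-2*(k:ℝ)))*Real.pi/N by ring] at hr
    have hex : ∃ n : ℤ, n * (N:ℤ) = 2*(j:ℤ) - 2*(k:ℤ) := by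
      apply sin_int_exists (show 0 < N by omega)
      push_cast
      exact hr
    obtain ⟨n, hn⟩ := hex
    have heven : Even (n * (N:ℤ)) := ⟨(j:ℤ) - k, by linarith⟩
    have hne : ¬ Even ((N:ℤ)) := by
      rw [Int.even_coe_nat]
      rw [Nat.even_iff]
      omega
    have hn2 : Even n := by
      rcases Int.even_mul.mp heven with h' | h'
      · exact h'
      · exact absurd h' hne
    obtain ⟨c, hc⟩ := hn2
    have hcN : c * (N:ℤ) = (j:ℤ) - k := by
      rw [hc] at hn
      linarith
    have hjk : (j:ℤ) - k = 0 :=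
      int_zero_of_bounds (show (0:ℤ) < N by exact_mod_cast (by omega : 0 < N)) hcN
        (by omega) (by omega)
    have : j = k := by omega
    rw [this]
  · exfalso
    rw [axisLine, Qinf, onLine_mk_mk, Fin.sum_univ_three, rvec0, rvec0, rvec1, rvec1,
      rvec2, rvec2] at h
    have hr : Real.cos ((m:ℝ)*Real.pi/N) * Real.cos ((2*(k:ℝ)+1)*Real.pi/N)
        + Real.sin ((m:ℝ)*Real.pi/N) * Real.sin ((2*(k:ℝ)+1)*Real.pi/N) = 0 := by
      have : ((Real.cos ((m:ℝ)*Real.pi/N) * Real.cos ((2*(k:ℝ)+1)*Real.pi/N)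
          + Real.sin ((m:ℝ)*Real.pi/N) * Real.sin ((2*(k:ℝ)+1)*Real.pi/N) : ℝ) : ℂ) = 0 := by
        simp only [Complex.ofReal_add, Complex.ofReal_mul, Complex.ofReal_neg,
          Complex.ofReal_one, Complex.ofReal_zero] at h ⊢
        linear_combination -h
      exact_mod_cast this
    rw [← Real.cos_sub] at hr
    rw [show (m:ℝ)*Real.pi/N - (2*(k:ℝ)+1)*Real.pi/N
        = ((m:ℝ)-(2*(k:ℝ)+1))*Real.pi/N by ring] at hr
    have := cos_int_ne_zero_of_odd (show 0 < N by omega) hodd ((m:ℤ) - (2*(k:ℤ)+1))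
    apply this
    push_cast
    exact hr
  · right
    rw [Set.mem_singleton_iff] at hL
    exact hL

end Through2
section EvenDir

lemma side_z_to_axis {N j : ℕ} (hN : 3 ≤ N) (he : Even N) (hj : j < N) {Q : Pt}
    (hside : onLine (sideLine N j) Q) (hz : onLine zLine Q) :
    onLine (axisLine N ((2*j+1+N/2) % N)) Q := by
  have hq2 : Q.rep 2 = 0 := (onLine_zLine_iff Q).mp hz
  rw [onLine_side_iff] at hside
  set s : ℕ := 2*j+1+N/2 with hs
  set c : ℕ := s / N with hcdef
  obtain ⟨t, ht⟩ := he
  have hNR : (N:ℝ) = 2*(t:ℝ) := by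
    push_cast [ht]; ring
  have htpos : (0:ℝ) < (t:ℝ) := by
    have : 0 < t := by omega
    exact_mod_cast this
  have e1 : (s:ℝ)*Real.pi/N = (2*(j:ℝ)+1)*Real.pi/N + Real.pi/2 := by
    have hsr : (s:ℝ) = 2*(j:ℝ)+1+(t:ℝ) := by
      have : s = 2*j+1+t := by omega
      rw [this]; push_cast; ring
    rw [hsr, hNR]
    field_simp
  have hsin : Real.cos ((2*(j:ℝ)+1)*Real.pi/N)
      = (-1:ℝ)^c * Real.sin (((s % N : ℕ):ℝ)*Real.pi/N) := by
    rw [← sin_nat_mod (show 0 < N by omega) s, e1, Real.sin_add_pi_div_two]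
  have hcos : Real.sin ((2*(j:ℝ)+1)*Real.pi/N)
      = -((-1:ℝ)^c * Real.cos (((s % N : ℕ):ℝ)*Real.pi/N)) := by
    rw [← cos_nat_mod (show 0 < N by omega) s, e1, Real.cos_add_pi_div_two]
    ring
  rw [onLine_axis_iff]
  have hsinC : ((Real.cos ((2*(j:ℝ)+1)*Real.pi/N) : ℝ) : ℂ)
      = (-1:ℂ)^c * ((Real.sin (((s % N : ℕ):ℝ)*Real.pi/N) : ℝ) : ℂ) := by
    rw [hsin]
    simp only [Complex.ofReal_mul, Complex.ofReal_pow, Complex.ofReal_neg,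
      Complex.ofReal_one]
  have hcosC : ((Real.sin ((2*(j:ℝ)+1)*Real.pi/N) : ℝ) : ℂ)
      = -((-1:ℂ)^c * ((Real.cos (((s % N : ℕ):ℝ)*Real.pi/N) : ℝ) : ℂ)) := by
    rw [hcos]
    simp only [Complex.ofReal_mul, Complex.ofReal_pow, Complex.ofReal_neg,
      Complex.ofReal_one]
  rw [hsinC, hcosC] at hside
  have key : (-1:ℂ)^c * (((Real.sin (((s % N : ℕ):ℝ)*Real.pi/N) : ℝ) : ℂ) * Q.rep 0
      - ((Real.cos (((s % N : ℕ):ℝ)*Real.pi/N) : ℝ) : ℂ) * Q.rep 1) = 0 := by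
    linear_combination hside + ((Real.cos (Real.pi/N) : ℝ) : ℂ) * hq2
  exact cancel_unit (pow_ne_zero _ (by norm_num)) key

lemma sides_to_axis_onLine {N j k : ℕ} (hN : 3 ≤ N) (hj : j < N) (hk : k < N)
    (hjk : j ≠ k) {Q : Pt} (hA : onLine (sideLine N j) Q) (hB : onLine (sideLine N k) Q) :
    onLine (axisLine N ((j+k+1) % N)) Q := by
  rw [onLine_side_iff] at hA hB
  have hφ := sides_pair (show 0 < N by omega) hj hk hjk hA hB
  set s : ℕ := j+k+1 with hs
  set c : ℕ := s / N with hcdef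
  have es : ((j:ℝ)+k+1) = (s:ℝ) := by rw [hs]; push_cast; ring
  rw [es] at hφ
  rw [sin_nat_mod (show 0 < N by omega) s, cos_nat_mod (show 0 < N by omega) s] at hφ
  rw [onLine_axis_iff]
  have key : (-1:ℂ)^c * (((Real.sin (((s % N : ℕ):ℝ)*Real.pi/N) : ℝ) : ℂ) * Q.rep 0
      - ((Real.cos (((s % N : ℕ):ℝ)*Real.pi/N) : ℝ) : ℂ) * Q.rep 1) = 0 := by
    simp only [Complex.ofReal_mul, Complex.ofReal_pow, Complex.ofReal_neg,
      Complex.ofReal_one] at hφ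
    linear_combination hφ
  exact cancel_unit (pow_ne_zero _ (by norm_num)) key

lemma even_supersolvable {N : ℕ} (hN : 3 ≤ N) (he : Even N) :
    Supersolvable (PbarArr N) := by
  refine ⟨zLine, center_sing hN, ?_⟩
  intro Q hQ _
  obtain ⟨L1, L2, m1, m2, o1, o2, h12⟩ := exists_two_lines (finite_PbarArr N) hQ
  have axdone : ∀ m : ℕ, m < N → onLine (axisLine N m) Q →
      ∃ L ∈ PbarArr N, onLine L zLine ∧ onLine L Q := by
    intro m hm ho
    exact ⟨axisLine N m, mem_axis hm, onLine_axis_center N m, ho⟩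
  have hmodN : ∀ s : ℕ, s % N < N := fun s => Nat.mod_lt s (by omega)
  rcases m1 with (⟨j, hj, rfl⟩ | ⟨m, hm, rfl⟩) | hL1
  · rcases m2 with (⟨k, hk, rfl⟩ | ⟨m, hm, rfl⟩) | hL2
    · have hjk : j ≠ k := fun h => h12 (by rw [h])
      exact axdone _ (hmodN (j+k+1)) (sides_to_axis_onLine hN hj hk hjk o1 o2)
    · exact axdone m hm o2
    · rw [Set.mem_singleton_iff] at hL2
      subst hL2
      exact axdone _ (hmodN (2*j+1+N/2)) (side_z_to_axis hN he hj o1 o2)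
  · exact axdone m hm o1
  · rw [Set.mem_singleton_iff] at hL1
    subst hL1
    rcases m2 with (⟨k, hk, rfl⟩ | ⟨m, hm, rfl⟩) | hL2
    · exact axdone _ (hmodN (2*k+1+N/2)) (side_z_to_axis hN he hk o2 o1)
    · exact axdone m hm o2
    · rw [Set.mem_singleton_iff] at hL2
      subst hL2
      exact absurd rfl h12

end EvenDir
section OddDir

lemma odd_not_supersolvable {N : ℕ} (hN : 3 ≤ N) (hodd : N % 2 = 1) :
    ¬ Supersolvable (PbarArr N) := by
  rintro ⟨P, hPSing, hPmod⟩
  by_cases hz : P.rep 2 = 0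
  · -- P is at infinity
    have hPO : P ≠ zLine := by
      rw [zLine, mkLine]
      exact ne_mk_of_rep2_zero hz (by rw [cvec2]; norm_num)
    obtain ⟨L, hLA, hLP, hLO⟩ := hPmod zLine (center_sing hN) (Ne.symm hPO)
    obtain ⟨m, hm, hLeq⟩ := through_center hN hLA hLO
    subst hLeq
    rw [onLine_axis_iff] at hLP
    have sidekill : ∀ j : ℕ, ¬ onLine (sideLine N j) P := by
      intro j hSide
      rw [onLine_side_iff] at hSide
      have E1 : ((Real.cos ((2*(j:ℝ)+1)*Real.pi/N) : ℝ) : ℂ) * P.rep 0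
          + ((Real.sin ((2*(j:ℝ)+1)*Real.pi/N) : ℝ) : ℂ) * P.rep 1 = 0 := by
        linear_combination hSide + ((Real.cos (Real.pi/N) : ℝ) : ℂ) * hz
      have E2 : ((Real.sin ((m:ℝ)*Real.pi/N) : ℝ) : ℂ) * P.rep 0
          + (-((Real.cos ((m:ℝ)*Real.pi/N) : ℝ) : ℂ)) * P.rep 1 = 0 := by
        linear_combination hLP
      have hdet : ((Real.sin ((m:ℝ)*Real.pi/N) : ℝ) : ℂ)
            * ((Real.sin ((2*(j:ℝ)+1)*Real.pi/N) : ℝ) : ℂ)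
          - (-((Real.cos ((m:ℝ)*Real.pi/N) : ℝ) : ℂ))
            * ((Real.cos ((2*(j:ℝ)+1)*Real.pi/N) : ℝ) : ℂ) ≠ 0 := by
        have hr : Real.cos ((m:ℝ)*Real.pi/N) * Real.cos ((2*(j:ℝ)+1)*Real.pi/N)
            + Real.sin ((m:ℝ)*Real.pi/N) * Real.sin ((2*(j:ℝ)+1)*Real.pi/N)
            = Real.cos ((((m:ℤ) - (2*(j:ℤ)+1) : ℤ):ℝ)*Real.pi/N) := by
          rw [← Real.cos_sub]
          congr 1
          push_cast
          ring
        have hne := cos_int_ne_zero_of_odd (show 0 < N by omega) hodd ((m:ℤ) - (2*(j:ℤ)+1))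
        intro hcon
        apply hne
        rw [← hr]
        have : ((Real.cos ((m:ℝ)*Real.pi/N) * Real.cos ((2*(j:ℝ)+1)*Real.pi/N)
            + Real.sin ((m:ℝ)*Real.pi/N) * Real.sin ((2*(j:ℝ)+1)*Real.pi/N) : ℝ) : ℂ) = 0 := by
          simp only [Complex.ofReal_add, Complex.ofReal_mul]
          linear_combination hcon
        exact_mod_cast this
      obtain ⟨h0, h1⟩ := solve22 E2 E1 hdet
      apply P.rep_nonzero
      funext i
      fin_cases i
      · exact h0
      · exact h1
      · exact hz
    have hPV0 : P ≠ Vtx0 := by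
      rw [Vtx0]
      exact ne_mk_of_rep2_zero hz (by rw [rvec2]; norm_num)
    obtain ⟨L1, hL1A, hL1P, hL1V⟩ := hPmod Vtx0 (vtx0_sing hN) (Ne.symm hPV0)
    rcases through_Vtx0 hN hL1A hL1V with rfl | rfl | rfl
    · exact sidekill 0 hL1P
    · exact sidekill (N-1) hL1P
    · rw [onLine_axis_iff] at hL1P
      have hp1 : P.rep 1 = 0 := by
        have hz0 : Real.sin (((0:ℕ):ℝ)*Real.pi/N) = 0 := by norm_num
        have hc0 : Real.cos (((0:ℕ):ℝ)*Real.pi/N) = 1 := by norm_num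
        rw [hz0, hc0] at hL1P
        simpa using hL1P
      have hPV1 : P ≠ Vtx1 N := by
        rw [Vtx1]
        exact ne_mk_of_rep2_zero hz (by rw [rvec2]; norm_num)
      obtain ⟨L2, hL2A, hL2P, hL2V⟩ := hPmod (Vtx1 N) (vtx1_sing hN) (Ne.symm hPV1)
      rcases through_Vtx1 hN hL2A hL2V with rfl | rfl | rfl
      · exact sidekill 0 hL2P
      · exact sidekill 1 hL2P
      · rw [onLine_axis_iff] at hL2P
        rw [hp1, mul_zero, sub_zero] at hL2P
        have hs2 : ((Real.sin (((2:ℕ):ℝ)*Real.pi/N) : ℝ) : ℂ) ≠ 0 := by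
          have := sin_2piN_pos hN
          have e : ((2:ℕ):ℝ)*Real.pi/N = 2*Real.pi/N := by push_cast; ring
          rw [e]
          exact_mod_cast ne_of_gt this
        have hp0 : P.rep 0 = 0 := cancel_unit hs2 hL2P
        apply P.rep_nonzero
        funext i
        fin_cases i
        · exact hp0
        · exact hp1
        · exact hz
  · -- P is not at infinity
    have hside : ∀ k, k < N → onLine (sideLine N k) P := by
      intro k hk
      have hPQ : P ≠ Qinf N k := by
        rw [Qinf]
        exact ne_mk_of_rep2_ne_zero hz (by exact rvec2 _ _ _)
      obtain ⟨L, hLA, hLP, hLQ⟩ := hPmod (Qinf N k) (qinf_sing hN hk) (Ne.symm hPQ)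
      rcases through_Qinf hN hodd hk hLA hLQ with rfl | rfl
      · exact hLP
      · exact absurd ((onLine_zLine_iff P).mp hLP) hz
    have h0 := hside 0 (by omega)
    have h1 := hside 1 (by omega)
    have h2 := hside 2 (by omega)
    rw [onLine_side_iff] at h0 h1 h2
    have e01 := sides_pair (show 0 < N by omega) (show 0 < N by omega)
      (show 1 < N by omega) (by omega) h0 h1
    have e12 := sides_pair (show 0 < N by omega) (show 1 < N by omega)
      (show 2 < N by omega) (by omega) h1 h2
    have ea : (((0:ℕ):ℝ)+(1:ℕ)+1) = (2:ℝ) := by push_cast; ring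
    have eb : (((1:ℕ):ℝ)+(2:ℕ)+1) = (4:ℝ) := by push_cast; ring
    rw [ea] at e01
    rw [eb] at e12
    have E1 : ((Real.sin ((2:ℝ)*Real.pi/N) : ℝ) : ℂ) * P.rep 0
        + (-((Real.cos ((2:ℝ)*Real.pi/N) : ℝ) : ℂ)) * P.rep 1 = 0 := by
      linear_combination e01
    have E2 : ((Real.sin ((4:ℝ)*Real.pi/N) : ℝ) : ℂ) * P.rep 0
        + (-((Real.cos ((4:ℝ)*Real.pi/N) : ℝ) : ℂ)) * P.rep 1 = 0 := by
      linear_combination e12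
    have hdet : ((Real.sin ((2:ℝ)*Real.pi/N) : ℝ) : ℂ)
          * (-((Real.cos ((4:ℝ)*Real.pi/N) : ℝ) : ℂ))
        - (-((Real.cos ((2:ℝ)*Real.pi/N) : ℝ) : ℂ))
          * ((Real.sin ((4:ℝ)*Real.pi/N) : ℝ) : ℂ) ≠ 0 := by
      have hr : Real.sin ((4:ℝ)*Real.pi/N) * Real.cos ((2:ℝ)*Real.pi/N)
          - Real.cos ((4:ℝ)*Real.pi/N) * Real.sin ((2:ℝ)*Real.pi/N)
          = Real.sin (2*Real.pi/N) := by
        rw [← Real.sin_sub]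
        congr 1
        ring
      intro hcon
      have : ((Real.sin ((4:ℝ)*Real.pi/N) * Real.cos ((2:ℝ)*Real.pi/N)
          - Real.cos ((4:ℝ)*Real.pi/N) * Real.sin ((2:ℝ)*Real.pi/N) : ℝ) : ℂ) = 0 := by
        simp only [Complex.ofReal_sub, Complex.ofReal_mul]
        linear_combination hcon
      rw [hr] at this
      have h' : Real.sin (2*Real.pi/N) = 0 := by exact_mod_cast this
      exact (ne_of_gt (sin_2piN_pos hN)) h'
    obtain ⟨hp0, hp1⟩ := solve22 E1 E2 hdet
    rw [hp0, hp1] at h0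
    have hp2 : P.rep 2 = 0 := by
      have hcπ : ((Real.cos (Real.pi/N) : ℝ) : ℂ) ≠ 0 := by
        exact_mod_cast ne_of_gt (cos_piN_pos hN)
      apply cancel_unit hcπ
      linear_combination -h0
    exact hz hp2

end OddDir
/-- For `N ≥ 3`, the complete `N`-gonal arrangement is supersolvable iff `N` is even. -/
theorem stmt5 (N : ℕ) (hN : 3 ≤ N) :
    Supersolvable (PbarArr N) ↔ Even N := by
  constructor
  · intro h
    by_contra hodd
    exact odd_not_supersolvable hN (Nat.not_even_iff.mp hodd) h
  · exact even_supersolvable hN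

end
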